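/- Every reflexive simplex is selfdual: if Δ ⊂ ℝⁿ is a reflexive simplex with vertices p₀, …, pₙ and weights w = (w₀, …, wₙ), and l₀, …, lₙ are the vertices of the dual reflexive simplex Δ* indexed so that ⟨p_i, l_j⟩ = −1 for i ≠ j, then ∑_{j=0}^{n} w_j l_j = 0; that is, the dual reflexive simplex Δ* has exactly the same weights w as Δ. -/
import Mathlib


open Finset

/-- The standard dot product on `Fin n → ℝ`. -/
def dotp {n : ℕ} (x y : Fin n → ℝ) : ℝ := ∑ i, x i * y i

/-- A point of `ℝⁿ` all of whose coordinates are integers. -/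
def IsLatticePoint {n : ℕ} (x : Fin n → ℝ) : Prop := ∀ i, ∃ m : ℤ, x i = (m : ℝ)

/-- A lattice polytope: the convex hull of finitely many lattice points. -/
def IsLatticePolytope {n : ℕ} (Δ : Set (Fin n → ℝ)) : Prop :=
  ∃ V : Set (Fin n → ℝ), V.Finite ∧ (∀ v ∈ V, IsLatticePoint v) ∧ Δ = convexHull ℝ V

/-- A (nonempty) face of a convex set `Δ`, cut out by a supporting hyperplane. -/
def IsFaceOf {n : ℕ} (F Δ : Set (Fin n → ℝ)) : Prop :=
  F.Nonempty ∧ ∃ u : Fin n → ℝ, ∃ c : ℝ,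
    (∀ x ∈ Δ, dotp x u ≤ c) ∧ F = {x ∈ Δ | dotp x u = c}

/-- The dimension of a subset of `ℝⁿ`: the dimension of its affine span. -/
noncomputable def faceDim {n : ℕ} (F : Set (Fin n → ℝ)) : ℕ :=
  Module.finrank ℝ ↥(vectorSpan ℝ F)

/-- A reflexive polytope with respect to the lattice `ℤⁿ`: a lattice polytope with `0` in its
interior, each of whose facets lies on a hyperplane `{x | ⟨x, l⟩ = -1}` with `l ∈ ℤⁿ`. -/
def IsReflexive {n : ℕ} (Δ : Set (Fin n → ℝ)) : Prop :=
  IsLatticePolytope Δ ∧ (0 : Fin n → ℝ) ∈ interior Δ ∧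
    ∀ F : Set (Fin n → ℝ), IsFaceOf F Δ → faceDim F + 1 = n →
      ∃ l : Fin n → ℤ, F ⊆ {x | dotp x (fun i => (l i : ℝ)) = -1}

/-- The dual (polar) set `Δ* = {y | ⟨x, y⟩ ≥ -1 for all x ∈ Δ}`. -/
def dualSet {n : ℕ} (Δ : Set (Fin n → ℝ)) : Set (Fin n → ℝ) :=
  {y | ∀ x ∈ Δ, -1 ≤ dotp x y}

/-- The face of `Δ*` dual to a face `Θ` of `Δ`. -/
def dualFace {n : ℕ} (Δ Θ : Set (Fin n → ℝ)) : Set (Fin n → ℝ) :=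
  {y ∈ dualSet Δ | ∀ x ∈ Θ, dotp x y = -1}

/-- Every reflexive simplex is selfdual: if `Δ ⊂ ℝⁿ` is a reflexive
simplex with vertices `p₀, …, pₙ` and weights `w`, and `l₀, …, lₙ` are the vertices of the
dual reflexive simplex `Δ*` indexed so that `⟨pᵢ, lⱼ⟩ = -1` for `i ≠ j`, then
`∑ⱼ wⱼ lⱼ = 0`, i.e. `Δ*` has exactly the same weights `w` as `Δ`. -/
theorem reflexive_simplex_selfdual (n : ℕ) (Δ : Set (Fin n → ℝ))
    (p l : Fin (n + 1) → (Fin n → ℝ))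
    (hp : ∀ i, IsLatticePoint (p i)) (hl : ∀ j, IsLatticePoint (l j))
    (haff : AffineIndependent ℝ p)
    (hΔ : Δ = convexHull ℝ (Set.range p))
    (href : IsReflexive Δ)
    (hdual : dualSet Δ = convexHull ℝ (Set.range l))
    (hpair : ∀ i j, i ≠ j → dotp (p i) (l j) = -1)
    (w : Fin (n + 1) → ℤ) (hwpos : ∀ i, 0 < w i)
    (hwgcd : Finset.univ.gcd w = 1)
    (hwsum : ∑ i, (w i : ℝ) • p i = (0 : Fin n → ℝ)) :
    ∑ j, (w j : ℝ) • l j = (0 : Fin n → ℝ) := by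
  classical
  set S : Fin n → ℝ := ∑ j, (w j : ℝ) • l j with hS
  have hcoord : ∀ k, ∑ i, (w i : ℝ) * p i k = 0 := by
    intro k
    have := congrFun hwsum k
    simpa using this
  have key1 : ∀ (c : Fin (n + 1) → ℝ) (y : Fin n → ℝ),
      ∑ i, c i * dotp (p i) y = ∑ k, (∑ i, c i * p i k) * y k := by
    intro c y
    simp only [dotp, Finset.mul_sum, Finset.sum_mul]
    rw [Finset.sum_comm]
    exact Finset.sum_congr rfl fun k _ => Finset.sum_congr rfl fun i _ => by ring
  have key2 : ∀ x : Fin n → ℝ, dotp x S = ∑ j, (w j : ℝ) * dotp x (l j) := by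
    intro x
    simp only [hS, dotp, Finset.sum_apply, Pi.smul_apply, smul_eq_mul, Finset.mul_sum]
    rw [Finset.sum_comm]
    exact Finset.sum_congr rfl fun j _ => Finset.sum_congr rfl fun k _ => by ring
  have hd : ∀ j, (w j : ℝ) * dotp (p j) (l j) = ∑ i ∈ Finset.univ \ {j}, (w i : ℝ) := by
    intro j
    have h0 : ∑ i, (w i : ℝ) * dotp (p i) (l j) = 0 := by
      rw [key1]; simp [hcoord]
    rw [Finset.sum_eq_add_sum_sdiff_singleton_of_mem (Finset.mem_univ j)] at h0
    have h1 : ∑ i ∈ Finset.univ \ {j}, (w i : ℝ) * dotp (p i) (l j)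
        = -∑ i ∈ Finset.univ \ {j}, (w i : ℝ) := by
      rw [← Finset.sum_neg_distrib]
      refine Finset.sum_congr rfl fun i hi => ?_
      have hij : i ≠ j := by simpa using (Finset.mem_sdiff.mp hi).2
      rw [hpair i j hij]; ring
    rw [h1] at h0
    linarith
  have hps : ∀ i, dotp (p i) S = 0 := by
    intro i
    rw [key2]
    rw [Finset.sum_eq_add_sum_sdiff_singleton_of_mem (Finset.mem_univ i)]
    have h2 : ∑ j ∈ Finset.univ \ {i}, (w j : ℝ) * dotp (p i) (l j)
        = -∑ j ∈ Finset.univ \ {i}, (w j : ℝ) := by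
      rw [← Finset.sum_neg_distrib]
      refine Finset.sum_congr rfl fun j hj => ?_
      have hij : j ≠ i := by simpa using (Finset.mem_sdiff.mp hj).2
      rw [hpair i j hij.symm]; ring
    rw [h2, hd i]
    ring
  have hx : ∀ x : Fin n → ℝ, dotp x S = 0 := by
    intro x
    have htop : affineSpan ℝ (Set.range p) = ⊤ := by
      rw [haff.affineSpan_eq_top_iff_card_eq_finrank_add_one]
      simp
    have hx' : x ∈ affineSpan ℝ (Set.range p) := htop ▸ AffineSubspace.mem_top ℝ _ x
    obtain ⟨c, hc1, hc2⟩ := eq_affineCombination_of_mem_affineSpan_of_fintype hx'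
    have hx3 : x = ∑ i, c i • p i := by
      rw [hc2, Finset.univ.affineCombination_eq_linear_combination p c hc1]
    have hxk : ∀ k, x k = ∑ i, c i * p i k := by
      intro k; rw [hx3]; simp
    have e : dotp x S = ∑ k, (∑ i, c i * p i k) * S k :=
      Finset.sum_congr rfl fun k _ => by rw [hxk k]
    rw [e, ← key1 c S]
    exact Finset.sum_eq_zero fun i _ => by rw [hps i]; ring
  funext k
  have := hx (Pi.single k 1)
  simpa [dotp, Pi.single_apply, ite_mul] using this
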